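/- Let ζ₁ < ζ₀ be real numbers, let a be a real number with a ≥ ζ₀, and let z be a complex number with z ∉ [ζ₁, ∞). Then |a − ζ₁| / |a − z| ≤ |z − ζ₁| / dist(z, [ζ₁, ∞)), where dist denotes the distance from z to the half-line [ζ₁,∞) ⊂ ℂ. -/

import Mathlib

/-- Let `ζ₁ < ζ₀` be real numbers, `a ≥ ζ₀` real, and `z ∈ ℂ` not on the half-line
`[ζ₁, ∞) ⊆ ℂ`.  Then `|a − ζ₁| / |a − z| ≤ |z − ζ₁| / dist(z, [ζ₁, ∞))`. -/
theorem stmt_0 (ζ₀ ζ₁ a : ℝ) (hζ : ζ₁ < ζ₀) (ha : ζ₀ ≤ a) (z : ℂ)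
    (hz : z ∉ (Complex.ofReal '' Set.Ici ζ₁)) :
    ‖(a : ℂ) - (ζ₁ : ℂ)‖ / ‖(a : ℂ) - z‖ ≤
      ‖z - (ζ₁ : ℂ)‖ / Metric.infDist z (Complex.ofReal '' Set.Ici ζ₁) := by
  set S := Complex.ofReal '' Set.Ici ζ₁ with hS
  have hζa : ζ₁ ≤ a := le_of_lt (lt_of_lt_of_le hζ ha)
  have hSne : S.Nonempty := ⟨(ζ₁ : ℂ), ζ₁, Set.mem_Ici.mpr le_rfl, rfl⟩
  have hSclosed : IsClosed S :=
    (Complex.isometry_ofReal.isClosedEmbedding.isClosedMap) _ isClosed_Ici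
  have hd0 : 0 < Metric.infDist z S :=
    (hSclosed.notMem_iff_infDist_pos hSne).mp hz
  have haS : (a : ℂ) ∈ S := ⟨a, Set.mem_Ici.mpr hζa, rfl⟩
  have haz : (0:ℝ) < ‖(a : ℂ) - z‖ := by
    rw [norm_pos_iff, sub_ne_zero]
    rintro rfl
    exact hz haS
  rcases le_or_gt ζ₁ z.re with hre | hre
  · -- foot of perpendicular is on the half-line; d ≤ |Im z|
    have hdle : Metric.infDist z S ≤ |z.im| := by
      have hmem : ((z.re : ℝ) : ℂ) ∈ S := ⟨z.re, Set.mem_Ici.mpr hre, rfl⟩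
      have hdist : dist z ((z.re : ℝ) : ℂ) = |z.im| := by
        rw [Complex.dist_eq]
        have : z - (z.re : ℂ) = (z.im : ℂ) * Complex.I := by
          apply Complex.ext <;> simp
        rw [this, norm_mul, Complex.norm_I, Complex.norm_real, Real.norm_eq_abs, mul_one]
      calc Metric.infDist z S ≤ dist z ((z.re : ℝ) : ℂ) :=
            Metric.infDist_le_dist_of_mem hmem
        _ = |z.im| := hdist
    have him : (0:ℝ) < |z.im| := lt_of_lt_of_le hd0 hdle
    have key : ‖(a:ℂ) - ζ₁‖ * |z.im| ≤
        ‖z - ζ₁‖ * ‖(a:ℂ) - z‖ := by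
      have hsq : (‖(a:ℂ) - ζ₁‖ * |z.im|)^2 ≤
          (‖z - ζ₁‖ * ‖(a:ℂ) - z‖)^2 := by
        rw [mul_pow, mul_pow, Complex.sq_norm, Complex.sq_norm, Complex.sq_norm, sq_abs]
        simp only [Complex.normSq_apply, Complex.sub_re, Complex.sub_im,
          Complex.ofReal_re, Complex.ofReal_im]
        nlinarith [sq_nonneg ((z.re - ζ₁) * (a - z.re) - z.im ^ 2),
          sq_nonneg (z.im), sub_nonneg.mpr hre, sub_nonneg.mpr hζa,
          mul_nonneg (sub_nonneg.mpr hre) (sub_nonneg.mpr hζa)]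
      have h1 := Real.sqrt_le_sqrt hsq
      rwa [Real.sqrt_sq (by positivity), Real.sqrt_sq (by positivity)] at h1
    calc ‖(a:ℂ) - ζ₁‖ / ‖(a:ℂ) - z‖
        ≤ ‖z - ζ₁‖ / |z.im| := by
          rw [div_le_div_iff₀ haz him]; linarith [key]
      _ ≤ ‖z - ζ₁‖ / Metric.infDist z S := by gcongr
  · -- z is to the left of ζ₁
    have hdle : Metric.infDist z S ≤ ‖z - ζ₁‖ := by
      have hmem : ((ζ₁ : ℝ) : ℂ) ∈ S := ⟨ζ₁, Set.mem_Ici.mpr le_rfl, rfl⟩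
      have := Metric.infDist_le_dist_of_mem (x := z) hmem
      rwa [Complex.dist_eq] at this
    have h1 : ‖(a:ℂ) - ζ₁‖ / ‖(a:ℂ) - z‖ ≤ 1 := by
      rw [div_le_one haz]
      have hsq : (‖(a:ℂ) - ζ₁‖)^2 ≤ (‖(a:ℂ) - z‖)^2 := by
        rw [Complex.sq_norm, Complex.sq_norm]
        simp only [Complex.normSq_apply, Complex.sub_re, Complex.sub_im,
          Complex.ofReal_re, Complex.ofReal_im]
        nlinarith [sq_nonneg z.im]
      have h2 := Real.sqrt_le_sqrt hsq
      rwa [Real.sqrt_sq (by positivity), Real.sqrt_sq (by positivity)] at h2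
    have h2 : (1:ℝ) ≤ ‖z - ζ₁‖ / Metric.infDist z S := by
      rw [le_div_iff₀ hd0, one_mul]; exact hdle
    exact le_trans h1 h2
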